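/- With pseudodifferential operators over a commutative differential ring (A, D) as above, for single-term operators S = s∂^m with m ≥ 0 and T = t∂^n with n < 0, the residue of the commutator [S,T] = ST − TS lies in the image of the derivation D; explicitly, res([S,T]) = C(m, m+n+1) · D( Σ_{α=0}^{m+n} (-1)^α D^α(s) D^(m+n-α)(t) ) when m+n ≥ 0 and is 0 otherwise. -/
import Mathlib

open scoped BigOperators

namespace Paper

variable {A : Type*} [CommRing A]

/-- Generalized binomial coefficient `C(k,i) = k(k-1)⋯(k-i+1)/i!` for `k : ℤ`. -/
noncomputable def gbinom (k : ℤ) (i : ℕ) : ℤ :=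
  (∏ j ∈ Finset.range i, (k - (j : ℤ))) / (i.factorial : ℤ)

/-- Multiplication of pseudodifferential operators, given by their coefficient
functions `ℤ → A`, with `∂^k f = Σ_{l≥0} C(k,l) D^l(f) ∂^(k-l)`. -/
noncomputable def pmul (D : A → A) (X Y : ℤ → A) : ℤ → A :=
  fun k => ∑ᶠ i : ℤ, ∑ᶠ l : ℕ, X i * (gbinom i l • D^[l] (Y (k + (l : ℤ) - i)))

/-- The residue: the coefficient of `∂⁻¹`. -/
def res (X : ℤ → A) : A := X (-1)

/-- The nonnegative-order (differential-operator) part. -/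
def pplus (X : ℤ → A) : ℤ → A := fun i => if 0 ≤ i then X i else 0

/-- The strictly negative-order part. -/
def pminus (X : ℤ → A) : ℤ → A := fun i => if i < 0 then X i else 0

/-- Boundedness of the order: coefficients vanish above some `M`. -/
def Bdd (X : ℤ → A) : Prop := ∃ M : ℤ, ∀ i : ℤ, M < i → X i = 0

/-- Commutator of pseudodifferential operators. -/
noncomputable def pcomm (D : A → A) (X Y : ℤ → A) : ℤ → A :=
  pmul D X Y - pmul D Y X

/-- The identity operator. -/
def pone : ℤ → A := fun i => if i = 0 then 1 else 0

/-- The single-term operator `s ∂^m`. -/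
def psingle (m : ℤ) (s : A) : ℤ → A := fun i => if i = m then s else 0

/-- Powers of a pseudodifferential operator. -/
noncomputable def ppow (D : A → A) (X : ℤ → A) : ℕ → ℤ → A
  | 0 => pone
  | n + 1 => pmul D X (ppow D X n)

/-- `D` is a derivation: additive and Leibniz. -/
def IsDeriv (D : A → A) : Prop :=
  (∀ a b : A, D (a + b) = D a + D b) ∧ ∀ a b : A, D (a * b) = D a * b + a * D b

/-- Nonnegative part of `L^n`. -/
noncomputable def Lplus (D : A → A) (L : ℤ → A) (n : ℕ) : ℤ → A := pplus (ppow D L n)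

/-- Strictly negative part of `L^n`. -/
noncomputable def Lminus (D : A → A) (L : ℤ → A) (n : ℕ) : ℤ → A := pminus (ppow D L n)

/-! ### Auxiliary lemmas -/

lemma prod_eq_desc (m : ℤ) (r : ℕ) :
    ∏ j ∈ Finset.range r, (m - (j : ℤ)) = (descPochhammer ℤ r).eval m := by
  induction r with
  | zero => simp [descPochhammer_zero]
  | succ r ih => rw [Finset.prod_range_succ, descPochhammer_succ_eval, ih]

lemma factorial_dvd_prod (m : ℤ) (r : ℕ) :
    (r.factorial : ℤ) ∣ ∏ j ∈ Finset.range r, (m - (j : ℤ)) := by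
  rw [prod_eq_desc, Polynomial.eval_eq_smeval,
    Ring.descPochhammer_eq_factorial_smul_choose (R := ℤ) m r]
  exact ⟨Ring.choose m r, by simp [nsmul_eq_mul]⟩

lemma gbinom_mul_fact (m : ℤ) (r : ℕ) :
    (r.factorial : ℤ) * gbinom m r = ∏ j ∈ Finset.range r, (m - (j : ℤ)) := by
  rw [gbinom, Int.mul_ediv_cancel' (factorial_dvd_prod m r)]

lemma gbinom_zero' (m : ℤ) : gbinom m 0 = 1 := by simp [gbinom]

lemma gbinom_reflect (m n : ℤ) (p : ℕ) (h : m + n = (p : ℤ)) :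
    gbinom n (p + 1) = (-1) ^ (p + 1) * gbinom m (p + 1) := by
  have hfac : (((p + 1).factorial : ℕ) : ℤ) ≠ 0 := by positivity
  have key : ∏ j ∈ Finset.range (p + 1), (n - (j : ℤ))
      = (-1) ^ (p + 1) * ∏ j ∈ Finset.range (p + 1), (m - (j : ℤ)) := by
    have hrefl := Finset.prod_range_reflect (fun j : ℕ => (m - (j : ℤ))) (p + 1)
    calc ∏ j ∈ Finset.range (p + 1), (n - (j : ℤ))
        = ∏ j ∈ Finset.range (p + 1), -(m - ((p + 1 - 1 - j : ℕ) : ℤ)) := by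
          apply Finset.prod_congr rfl
          intro j hj
          have hj' : j ≤ p := by simpa [Nat.lt_succ_iff] using hj
          have hc : ((p + 1 - 1 - j : ℕ) : ℤ) = (p : ℤ) - j := by
            have : p + 1 - 1 - j = p - j := rfl
            rw [this]
            omega
          rw [hc]
          omega
      _ = (-1) ^ (p + 1) * ∏ j ∈ Finset.range (p + 1), (m - ((p + 1 - 1 - j : ℕ) : ℤ)) := by
          have hfac2 : ∀ j ∈ Finset.range (p + 1),
              -(m - ((p + 1 - 1 - j : ℕ) : ℤ)) = (-1 : ℤ) * (m - ((p + 1 - 1 - j : ℕ) : ℤ)) :=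
            fun j _ => by ring
          rw [Finset.prod_congr rfl hfac2, Finset.prod_mul_distrib, Finset.prod_const,
            Finset.card_range]
      _ = (-1) ^ (p + 1) * ∏ j ∈ Finset.range (p + 1), (m - (j : ℤ)) := by rw [hrefl]
  apply mul_left_cancel₀ hfac
  rw [gbinom_mul_fact n (p + 1), key, ← gbinom_mul_fact m (p + 1)]
  ring

lemma pmul_single (D : A → A) (hD0 : D 0 = 0) (s t : A) (m n k : ℤ) :
    pmul D (psingle m s) (psingle n t) k =
      if 0 ≤ m + n - k then
        s * (gbinom m (m + n - k).toNat • D^[(m + n - k).toNat] t)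
      else 0 := by
  unfold pmul
  rw [finsum_eq_single _ m]
  · by_cases h : 0 ≤ m + n - k
    · rw [finsum_eq_single _ (m + n - k).toNat, if_pos h]
      · have hc : k + ((m + n - k).toNat : ℤ) - m = n := by omega
        have hval : psingle n t (k + ((m + n - k).toNat : ℤ) - m) = t := by
          unfold psingle
          rw [if_pos hc]
        rw [hval]
        simp [psingle]
      · intro l hl
        have hc : k + (l : ℤ) - m ≠ n := by
          intro hc'
          apply hl
          omega
        simp [psingle, hc, Function.iterate_fixed hD0]
    · rw [if_neg h]
      apply finsum_eq_zero_of_forall_eq_zero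
      intro l
      have hc : k + (l : ℤ) - m ≠ n := by
        intro hc'
        omega
      simp [psingle, hc, Function.iterate_fixed hD0]
  · intro i hi
    have : psingle m s i = 0 := by simp [psingle, hi]
    simp [this]

lemma D_zero (D : A → A) (hD : IsDeriv D) : D 0 = 0 := by
  have h := hD.1 0 0
  rw [add_zero] at h
  exact (left_eq_add.mp h)

lemma D_neg (D : A → A) (hD : IsDeriv D) (x : A) : D (-x) = -D x := by
  have h := hD.1 x (-x)
  rw [add_neg_cancel, D_zero D hD] at h
  exact eq_neg_of_add_eq_zero_right h.symm

lemma D_neg_one_pow_mul (D : A → A) (hD : IsDeriv D) (k : ℕ) (x : A) :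
    D ((-1 : A) ^ k * x) = (-1 : A) ^ k * D x := by
  induction k with
  | zero => simp
  | succ k ih =>
    have h1 : (-1 : A) ^ (k + 1) * x = -((-1 : A) ^ k * x) := by ring
    rw [h1, D_neg D hD, ih]
    ring

lemma tele (D : A → A) (hD : IsDeriv D) (s : A) : ∀ (p : ℕ) (t : A),
    D (∑ α ∈ Finset.range (p + 1), (-1 : A) ^ α * (D^[α] s * D^[p - α] t)) =
      s * D^[p + 1] t + (-1 : A) ^ p * (D^[p + 1] s * t) := by
  intro p
  induction p with
  | zero =>
    intro t
    simp only [zero_add, Finset.sum_range_one, pow_zero, one_mul, Nat.sub_zero,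
      Function.iterate_zero, id_eq, Function.iterate_one]
    rw [hD.2 s t]
    ring
  | succ p ih =>
    intro t
    have hsplit : ∑ α ∈ Finset.range (p + 2), (-1 : A) ^ α * (D^[α] s * D^[p + 1 - α] t)
        = (∑ α ∈ Finset.range (p + 1), (-1 : A) ^ α * (D^[α] s * D^[p - α] (D t)))
          + (-1 : A) ^ (p + 1) * (D^[p + 1] s * t) := by
      rw [Finset.sum_range_succ]
      congr 1
      · apply Finset.sum_congr rfl
        intro α hα
        have hα' : α ≤ p := by simpa [Nat.lt_succ_iff] using hα
        have h2 : p + 1 - α = (p - α) + 1 := by omega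
        rw [h2, Function.iterate_succ_apply]
      · simp
    rw [hsplit, hD.1, ih (D t), D_neg_one_pow_mul D hD, hD.2,
      ← Function.iterate_succ_apply D (p + 1) t,
      ← Function.iterate_succ_apply' D (p + 1) s]
    have hpow : ((-1 : A) ^ (p + 1)) = -((-1 : A) ^ p) := by ring
    rw [hpow]
    ring

/-- For single-term operators `S = s∂^m` (`m ≥ 0`) and `T = t∂^n` (`n < 0`),
the residue of the commutator `[S,T]` is a total derivative; explicitly,
`res([S,T]) = C(m, m+n+1)·D(Σ_{α=0}^{m+n} (-1)^α D^α(s) D^(m+n-α)(t))` when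
`m + n ≥ 0`, and `0` otherwise. -/
theorem stmt3 {A : Type*} [CommRing A] (D : A → A) (hD : IsDeriv D)
    (s t : A) (m n : ℤ) (hm : 0 ≤ m) (hn : n < 0) :
    res (pcomm D (psingle m s) (psingle n t)) ∈ Set.range D ∧
    res (pcomm D (psingle m s) (psingle n t)) =
      if 0 ≤ m + n then
        gbinom m (m + n + 1).toNat •
          D (∑ α ∈ Finset.range ((m + n).toNat + 1),
              (-1 : A) ^ α * (D^[α] s * D^[(m + n).toNat - α] t))
      else 0 := by
  have hD0 : D 0 = 0 := by
    have h := hD.1 0 0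
    rw [add_zero] at h
    exact (left_eq_add.mp h)
  have hres : res (pcomm D (psingle m s) (psingle n t))
      = (if 0 ≤ m + n + 1 then
            s * (gbinom m (m + n + 1).toNat • D^[(m + n + 1).toNat] t) else 0)
        - (if 0 ≤ m + n + 1 then
            t * (gbinom n (m + n + 1).toNat • D^[(m + n + 1).toNat] s) else 0) := by
    show (pmul D (psingle m s) (psingle n t) - pmul D (psingle n t) (psingle m s)) (-1) = _
    rw [Pi.sub_apply, pmul_single D hD0 s t m n (-1), pmul_single D hD0 t s n m (-1)]
    rw [show m + n - (-1) = m + n + 1 by ring, show n + m - (-1) = m + n + 1 by ring]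
  have key : res (pcomm D (psingle m s) (psingle n t)) =
      if 0 ≤ m + n then
        gbinom m (m + n + 1).toNat •
          D (∑ α ∈ Finset.range ((m + n).toNat + 1),
              (-1 : A) ^ α * (D^[α] s * D^[(m + n).toNat - α] t))
      else 0 := by
    by_cases hp : 0 ≤ m + n
    · set p : ℕ := (m + n).toNat with hpdef
      have hp1 : (m + n + 1).toNat = p + 1 := by omega
      have hmn : m + n = (p : ℤ) := by omega
      have hrefl := gbinom_reflect m n p hmn
      rw [if_pos hp, hres]
      simp only [if_pos (show (0:ℤ) ≤ m + n + 1 by omega)]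
      rw [hp1, tele D hD s p t, hrefl]
      rw [zsmul_eq_mul, zsmul_eq_mul, zsmul_eq_mul]
      push_cast
      ring
    · rw [if_neg hp, hres]
      by_cases h1 : 0 ≤ m + n + 1
      · have h0 : (m + n + 1).toNat = 0 := by omega
        simp only [if_pos h1]
        rw [h0]
        simp [gbinom_zero', mul_comm]
      · simp only [if_neg h1]
        simp
  refine ⟨?_, key⟩
  rw [key]
  by_cases hp : 0 ≤ m + n
  · rw [if_pos hp]
    refine ⟨gbinom m (m + n + 1).toNat •
      (∑ α ∈ Finset.range ((m + n).toNat + 1),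
        (-1 : A) ^ α * (D^[α] s * D^[(m + n).toNat - α] t)), ?_⟩
    exact (AddMonoidHom.mk' D hD.1).map_zsmul _ _
  · rw [if_neg hp]
    exact ⟨0, hD0⟩

end Paper
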